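/- Let Σ be a complete simplicial fan with rays ρ_1,…,ρ_n generated by b̄_1,…,b̄_n. Every element of the deformed group ring ℚ[N]^Σ can be written uniquely as a sum Σ_{v ∈ Box(Σ)} y^v · s_v with s_v in the subring S_Σ generated by y^{b_1},…,y^{b_n}; that is, ℚ[N]^Σ = ⊕_{v ∈ Box(Σ)} y^v · S_Σ as S_Σ-modules. -/

import Mathlib

/-- The (simplicial) cone in `V` spanned by the rays `w i`, `i ∈ S`. -/
def coneOf {V : Type} [AddCommGroup V] [Module ℚ V] {n : ℕ}
    (w : Fin n → V) (S : Finset (Fin n)) : Set V :=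
  {x | ∃ q : Fin n → ℚ, (∀ i, 0 ≤ q i) ∧ (∀ i, i ∉ S → q i = 0) ∧
    x = ∑ i, q i • w i}

/-- The multiplication of the deformed group ring `ℚ[N]^Σ`: on the ℚ-vector space
`⊕_{c ∈ N} ℚ·y^c = (N →₀ ℚ)` it is given on monomials by
`y^{c₁} · y^{c₂} = y^{c₁+c₂}` if `bar c₁` and `bar c₂` lie in a common cone of the
fan (with cones `coneOf w S`, `S ∈ Δ`), and `0` otherwise. -/
noncomputable def dmul {N V : Type} [AddCommGroup N] [AddCommGroup V] [Module ℚ V]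
    {n : ℕ} (bar : N →+ V) (w : Fin n → V) (Δ : Finset (Finset (Fin n)))
    (f g : N →₀ ℚ) : N →₀ ℚ :=
  open Classical in
  f.sum fun c₁ a => g.sum fun c₂ b =>
    if ∃ S ∈ Δ, bar c₁ ∈ coneOf w S ∧ bar c₂ ∈ coneOf w S then
      Finsupp.single (c₁ + c₂) (a * b)
    else 0


/-- `Box(Σ)`: the set of `v ∈ N` such that `bar v = ∑_{i ∈ S} q i • w i` with
`0 ≤ q i < 1` for some `d`-dimensional cone `S ∈ Δ`. -/
def BoxSet {N V : Type} [AddCommGroup N] [AddCommGroup V] [Module ℚ V] {n : ℕ}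
    (bar : N →+ V) (w : Fin n → V) (Δ : Finset (Finset (Fin n))) (d : ℕ) : Set N :=
  {v | ∃ S ∈ Δ, S.card = d ∧ ∃ q : Fin n → ℚ,
    (∀ i, 0 ≤ q i ∧ q i < 1) ∧ (∀ i, i ∉ S → q i = 0) ∧ bar v = ∑ i, q i • w i}

/-- The subring `S_Σ ⊆ ℚ[N]^Σ` generated by the monomials `y^{b i}`: its underlying
`ℚ`-vector space is spanned by the monomials `y^{∑ k i • b i}` whose support
`{i | k i ≠ 0}` lies in a cone of the fan. -/
noncomputable def SRing {N : Type} [AddCommGroup N] {n : ℕ}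
    (b : Fin n → N) (Δ : Finset (Finset (Fin n))) : Submodule ℚ (N →₀ ℚ) :=
  Submodule.span ℚ {f | ∃ k : Fin n → ℕ, (∃ S ∈ Δ, ∀ i, k i ≠ 0 → i ∈ S) ∧
    f = Finsupp.single (∑ i, k i • b i) 1}


open Classical in
theorem dmul_single_single {N V : Type} [AddCommGroup N] [AddCommGroup V] [Module ℚ V]
    {n : ℕ} (bar : N →+ V) (w : Fin n → V) (Δ : Finset (Finset (Fin n)))
    (c₁ c₂ : N) (a bb : ℚ) :
    dmul bar w Δ (Finsupp.single c₁ a) (Finsupp.single c₂ bb) =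
      if ∃ S ∈ Δ, bar c₁ ∈ coneOf w S ∧ bar c₂ ∈ coneOf w S then
        Finsupp.single (c₁ + c₂) (a * bb) else 0 := by
  unfold dmul
  rw [Finsupp.sum_single_index, Finsupp.sum_single_index]
  · split <;> simp
  · rw [Finsupp.sum_single_index] <;> split <;> simp

noncomputable def dmulL {N V : Type} [AddCommGroup N] [AddCommGroup V] [Module ℚ V]
    {n : ℕ} (bar : N →+ V) (w : Fin n → V) (Δ : Finset (Finset (Fin n)))
    (f : N →₀ ℚ) : (N →₀ ℚ) →ₗ[ℚ] (N →₀ ℚ) where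
  toFun g := dmul bar w Δ f g
  map_add' g g' := by
    unfold dmul
    rw [← Finsupp.sum_add]
    refine Finsupp.sum_congr fun c₁ _ => ?_
    refine Finsupp.sum_add_index' (fun c₂ => by split <;> simp)
      (fun c₂ b₁ b₂ => by split <;> simp [mul_add, Finsupp.single_add])
  map_smul' r g := by
    unfold dmul
    simp only [RingHom.id_apply]
    rw [Finsupp.smul_sum]
    refine Finsupp.sum_congr fun c₁ _ => ?_
    rw [Finsupp.sum_smul_index (fun c₂ => by split <;> simp), Finsupp.smul_sum]
    refine Finsupp.sum_congr fun c₂ _ => ?_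
    split
    · rw [Finsupp.smul_single', mul_left_comm]
    · simp

section Aux
variable {N V : Type} [AddCommGroup N] [AddCommGroup V] [Module ℚ V]
  {n d : ℕ} (bar : N →+ V) (b : Fin n → N) (w : Fin n → V)
  (Δ : Finset (Finset (Fin n)))

theorem rep_unique (hind : ∀ S ∈ Δ, LinearIndependent ℚ fun i : S => w i.1)
    {S : Finset (Fin n)} (hS : S ∈ Δ) {q q' : Fin n → ℚ}
    (hq : ∀ i ∉ S, q i = 0) (hq' : ∀ i ∉ S, q' i = 0)
    (h : ∑ i, q i • w i = ∑ i, q' i • w i) : q = q' := by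
  have hli := hind S hS
  rw [Fintype.linearIndependent_iff] at hli
  have key : ∀ i : S, q i - q' i = 0 := by
    refine hli (fun i => q i - q' i) ?_
    have : ∑ i : S, (q i.1 - q' i.1) • w i.1 = ∑ i ∈ S, (q i - q' i) • w i :=
      Finset.sum_coe_sort S (fun i => (q i - q' i) • w i)
    rw [this]
    rw [Finset.sum_subset (S.subset_univ) (by
      intro i _ hi
      rw [hq i hi, hq' i hi, sub_zero, zero_smul])]
    simp [sub_smul, Finset.sum_sub_distrib, h]
  funext i
  by_cases hi : i ∈ S
  · have := key ⟨i, hi⟩; simpa [sub_eq_zero] using this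
  · rw [hq i hi, hq' i hi]

theorem support_in (hind : ∀ S ∈ Δ, LinearIndependent ℚ fun i : S => w i.1)
    (hglue : ∀ S ∈ Δ, ∀ T ∈ Δ, coneOf w S ∩ coneOf w T = coneOf w (S ∩ T))
    {S T : Finset (Fin n)} (hS : S ∈ Δ) (hT : T ∈ Δ) {q : Fin n → ℚ}
    (hq0 : ∀ i, 0 ≤ q i) (hqT : ∀ i ∉ T, q i = 0)
    (hx : ∑ i, q i • w i ∈ coneOf w S) : ∀ i ∉ S, q i = 0 := by
  have hxT : ∑ i, q i • w i ∈ coneOf w T := ⟨q, hq0, hqT, rfl⟩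
  have hxST : ∑ i, q i • w i ∈ coneOf w (S ∩ T) := by
    rw [← hglue S hS T hT]; exact ⟨hx, hxT⟩
  obtain ⟨r, hr0, hrST, hr⟩ := hxST
  have hrT : ∀ i ∉ T, r i = 0 := fun i hi => hrST i (by simp [hi])
  have : q = r := rep_unique w Δ hind hT hqT hrT hr
  intro i hi
  rw [this]; exact hrST i (by simp [hi])

/-- normalized decomposition data -/
def GoodDec (c v : N) : Prop :=
  v ∈ BoxSet bar w Δ d ∧ ∃ k : Fin n → ℕ,
    (∃ S' ∈ Δ, ∀ i, k i ≠ 0 → i ∈ S') ∧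
    (∃ S ∈ Δ, bar v ∈ coneOf w S ∧ bar (∑ i, k i • b i) ∈ coneOf w S) ∧
    c = v + ∑ i, k i • b i

theorem bar_msum (hw : w = fun i => bar (b i)) (k : Fin n → ℕ) :
    bar (∑ i, k i • b i) = ∑ i, (k i : ℚ) • w i := by
  rw [map_sum]
  refine Finset.sum_congr rfl fun i _ => ?_
  rw [map_nsmul, hw, Nat.cast_smul_eq_nsmul]

theorem goodDec_norm (hw : w = fun i => bar (b i))
    (hind : ∀ S ∈ Δ, LinearIndependent ℚ fun i : S => w i.1)
    (hglue : ∀ S ∈ Δ, ∀ T ∈ Δ, coneOf w S ∩ coneOf w T = coneOf w (S ∩ T))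
    {c v : N} (h : GoodDec bar b w Δ (d := d) c v) :
    ∃ S ∈ Δ, ∃ q : Fin n → ℚ, ∃ k : Fin n → ℕ,
      (∀ i, 0 ≤ q i ∧ q i < 1) ∧ (∀ i ∉ S, q i = 0 ∧ k i = 0) ∧
      bar c = ∑ i, (q i + (k i : ℚ)) • w i ∧ v = c - ∑ i, k i • b i := by
  obtain ⟨⟨T, hT, _, qB, hqB01, hqBT, hbarv⟩, k, ⟨S', hS', hkS'⟩, ⟨S, hS, hvS, hmS⟩, hc⟩ := h
  have hbarm := bar_msum bar b w hw k
  have hqBS : ∀ i ∉ S, qB i = 0 := by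
    refine support_in w Δ hind hglue hS hT (fun i => (hqB01 i).1) hqBT ?_
    rw [← hbarv]; exact hvS
  have hkS : ∀ i ∉ S, k i = 0 := by
    have := support_in w Δ hind hglue hS hS' (q := fun i => (k i : ℚ))
      (fun i => by positivity) (fun i hi => by
        by_contra hne
        exact hi (hkS' i (by simpa using hne)))
      (by rw [← hbarm]; exact hmS)
    intro i hi; simpa using this i hi
  refine ⟨S, hS, qB, k, hqB01, fun i hi => ⟨hqBS i hi, hkS i hi⟩, ?_, ?_⟩
  · rw [hc, map_add, hbarv, hbarm, ← Finset.sum_add_distrib]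
    exact Finset.sum_congr rfl fun i _ => (add_smul _ _ _).symm
  · rw [hc]; abel

theorem goodDec_unique (hw : w = fun i => bar (b i))
    (hind : ∀ S ∈ Δ, LinearIndependent ℚ fun i : S => w i.1)
    (hglue : ∀ S ∈ Δ, ∀ T ∈ Δ, coneOf w S ∩ coneOf w T = coneOf w (S ∩ T))
    {c v v' : N} (h : GoodDec bar b w Δ (d := d) c v)
    (h' : GoodDec bar b w Δ (d := d) c v') : v = v' := by
  obtain ⟨S, hS, q, k, hq01, hSsupp, hbar, hv⟩ := goodDec_norm bar b w Δ hw hind hglue h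
  obtain ⟨S', hS', q', k', hq01', hSsupp', hbar', hv'⟩ := goodDec_norm bar b w Δ hw hind hglue h'
  -- bar c has reps over S and S'
  have hsum : ∑ i, (q i + (k i : ℚ)) • w i = ∑ i, (q' i + (k' i : ℚ)) • w i := by
    rw [← hbar, ← hbar']
  -- bar c ∈ coneOf w S'
  have hcS' : ∑ i, (q i + (k i : ℚ)) • w i ∈ coneOf w S' :=
    ⟨fun i => q' i + k' i, fun i => add_nonneg (hq01' i).1 (Nat.cast_nonneg _),
      fun i hi => by simp [(hSsupp' i hi).1, (hSsupp' i hi).2], hsum⟩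
  have hqkS' : ∀ i ∉ S', q i + (k i : ℚ) = 0 :=
    support_in w Δ hind hglue hS' hS
      (fun i => add_nonneg (hq01 i).1 (Nat.cast_nonneg _))
      (fun i hi => by simp [(hSsupp i hi).1, (hSsupp i hi).2]) hcS'
  have heq : (fun i => q i + (k i : ℚ)) = fun i => q' i + (k' i : ℚ) :=
    rep_unique w Δ hind hS' hqkS'
      (fun i hi => by simp [(hSsupp' i hi).1, (hSsupp' i hi).2]) hsum
  have hkk : k = k' := by
    funext i
    have hqi := hq01 i
    have hqi' := hq01' i
    have h1 : (k i : ℤ) = ⌊q i + (k i : ℚ)⌋ := by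
      rw [Int.floor_add_natCast, Int.floor_eq_zero_iff.2 ⟨hqi.1, hqi.2⟩, zero_add]
    have h2 : (k' i : ℤ) = ⌊q' i + (k' i : ℚ)⌋ := by
      rw [Int.floor_add_natCast, Int.floor_eq_zero_iff.2 ⟨hqi'.1, hqi'.2⟩, zero_add]
    have := congrFun heq i
    rw [this] at h1
    rw [← h2] at h1
    exact_mod_cast h1
  rw [hv, hv', hkk]
end Aux

section Aux2
variable {N V : Type} [AddCommGroup N] [AddCommGroup V] [Module ℚ V]
  {n d : ℕ} (bar : N →+ V) (b : Fin n → N) (w : Fin n → V)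
  (Δ : Finset (Finset (Fin n)))

theorem exists_dec (hw : w = fun i => bar (b i))
    (hcomplete : ∀ x : V, ∃ S ∈ Δ, x ∈ coneOf w S)
    (hmax : ∀ S ∈ Δ, ∃ T ∈ Δ, S ⊆ T ∧ T.card = d) (c : N) :
    ∃ v : N, ∃ k : Fin n → ℕ, ∃ S : Finset (Fin n),
      v ∈ BoxSet bar w Δ d ∧ S ∈ Δ ∧ (∀ i, k i ≠ 0 → i ∈ S) ∧
      bar v ∈ coneOf w S ∧ bar (∑ i, k i • b i) ∈ coneOf w S ∧
      c = v + ∑ i, k i • b i := by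
  obtain ⟨S₀, hS₀, q, hq0, hqS₀, hbarc⟩ := hcomplete (bar c)
  obtain ⟨T, hT, hS₀T, hTd⟩ := hmax S₀ hS₀
  have hqT : ∀ i ∉ T, q i = 0 := fun i hi => hqS₀ i (fun h => hi (hS₀T h))
  set k : Fin n → ℕ := fun i => (⌊q i⌋).toNat with hk
  have hkq : ∀ i, (k i : ℚ) = (⌊q i⌋ : ℚ) := fun i => by
    rw [hk]; norm_cast; exact Int.toNat_of_nonneg (Int.floor_nonneg.2 (hq0 i))
  set v : N := c - ∑ i, k i • b i with hv
  have hbarm : bar (∑ i, k i • b i) = ∑ i, (k i : ℚ) • w i := bar_msum bar b w hw k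
  have hbarv : bar v = ∑ i, (q i - (k i : ℚ)) • w i := by
    rw [hv, map_sub, hbarc, hbarm, ← Finset.sum_sub_distrib]
    exact Finset.sum_congr rfl fun i _ => (sub_smul _ _ _).symm
  have hfr : ∀ i, 0 ≤ q i - (k i : ℚ) ∧ q i - (k i : ℚ) < 1 := fun i => by
    rw [hkq i]
    constructor
    · simpa using Int.fract_nonneg (q i)
    · rw [show q i - (⌊q i⌋ : ℚ) = Int.fract (q i) from Int.self_sub_floor (q i)]
      exact Int.fract_lt_one _
  have hkT : ∀ i, k i ≠ 0 → i ∈ T := by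
    intro i hne
    by_contra hi
    exact hne (by rw [hk]; simp [hqT i hi])
  have hfrT : ∀ i ∉ T, q i - (k i : ℚ) = 0 := fun i hi => by
    have : k i = 0 := by rw [hk]; simp [hqT i hi]
    simp [hqT i hi, this]
  refine ⟨v, k, T, ⟨T, hT, hTd, fun i => q i - (k i : ℚ), hfr, hfrT, hbarv⟩, hT, hkT,
    ⟨fun i => q i - (k i : ℚ), fun i => (hfr i).1, hfrT, hbarv⟩,
    ⟨fun i => (k i : ℚ), fun i => Nat.cast_nonneg _, fun i hi => by
      simp [show k i = 0 from by rw [hk]; simp [hqT i hi]], hbarm⟩, by rw [hv]; abel⟩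

theorem dmul_supported {v : N} (hv : v ∈ BoxSet bar w Δ d) {t : N →₀ ℚ}
    (ht : t ∈ SRing b Δ) :
    dmul bar w Δ (Finsupp.single v 1) t ∈
      Finsupp.supported ℚ ℚ {c | GoodDec bar b w Δ (d := d) c v} := by
  have : SRing b Δ ≤ (Finsupp.supported ℚ ℚ {c | GoodDec bar b w Δ (d := d) c v}).comap
      (dmulL bar w Δ (Finsupp.single v 1)) := by
    rw [SRing, Submodule.span_le]
    rintro f ⟨k, ⟨S', hS', hkS'⟩, rfl⟩
    simp only [Submodule.mem_comap, SetLike.mem_coe]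
    show dmul bar w Δ (Finsupp.single v 1) (Finsupp.single (∑ i, k i • b i) 1) ∈ _
    rw [dmul_single_single]
    split
    · rename_i hcond
      rw [Finsupp.mem_supported]
      intro c hc
      have hc' : c = v + ∑ i, k i • b i :=
        Finset.mem_singleton.mp (Finsupp.support_single_subset (Finset.mem_coe.mp hc))
      subst hc'
      exact ⟨hv, k, ⟨S', hS', hkS'⟩, hcond, rfl⟩
    · exact Submodule.zero_mem _
  exact this ht
end Aux2


/-- **`ℚ[N]^Σ = ⊕_{v ∈ Box(Σ)} y^v · S_Σ`.**  Let `Σ` be a complete simplicial fan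
in the `d`-dimensional space `N_ℚ` with rays `w i = bar (b i)`.  Every element of
the deformed group ring can be written as `∑_{v ∈ Box(Σ)} y^v · s_v` with
`s_v ∈ S_Σ`, and the components `y^v · s_v` of such a decomposition are unique. -/
theorem stmt_9 (N V : Type) [AddCommGroup N] [AddCommGroup V] [Module ℚ V]
    (n d : ℕ) (bar : N →+ V) (b : Fin n → N) (w : Fin n → V)
    (hw : w = fun i => bar (b i))
    (Δ : Finset (Finset (Fin n)))
    (hind : ∀ S ∈ Δ, LinearIndependent ℚ fun i : S => w i.1)
    (hdown : ∀ S ∈ Δ, ∀ T ⊆ S, T ∈ Δ)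
    (hglue : ∀ S ∈ Δ, ∀ T ∈ Δ, coneOf w S ∩ coneOf w T = coneOf w (S ∩ T))
    (hcomplete : ∀ x : V, ∃ S ∈ Δ, x ∈ coneOf w S)
    (hdim : Module.finrank ℚ V = d)
    (hmax : ∀ S ∈ Δ, ∃ T ∈ Δ, S ⊆ T ∧ T.card = d) :
    (∀ f : N →₀ ℚ, ∃ s : ↥(BoxSet bar w Δ d) →₀ (N →₀ ℚ),
        (∀ v : ↥(BoxSet bar w Δ d), s v ∈ SRing b Δ) ∧
        f = s.sum fun v t => dmul bar w Δ (Finsupp.single (v : N) 1) t) ∧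
    (∀ s s' : ↥(BoxSet bar w Δ d) →₀ (N →₀ ℚ),
        (∀ v : ↥(BoxSet bar w Δ d), s v ∈ SRing b Δ) → (∀ v : ↥(BoxSet bar w Δ d), s' v ∈ SRing b Δ) →
        (s.sum fun v t => dmul bar w Δ (Finsupp.single (v : N) 1) t) =
          (s'.sum fun v t => dmul bar w Δ (Finsupp.single (v : N) 1) t) →
        ∀ v : ↥(BoxSet bar w Δ d), dmul bar w Δ (Finsupp.single (v : N) 1) (s v) =
          dmul bar w Δ (Finsupp.single (v : N) 1) (s' v)) := by
  classical
  have hz : ∀ v : ↥(BoxSet bar w Δ d), dmul bar w Δ (Finsupp.single (v : N) 1) (0 : N →₀ ℚ) = 0 :=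
    fun v => map_zero (dmulL bar w Δ (Finsupp.single (v : N) 1))
  have ha : ∀ (v : ↥(BoxSet bar w Δ d)) (t₁ t₂ : N →₀ ℚ),
      dmul bar w Δ (Finsupp.single (v : N) 1) (t₁ + t₂) =
        dmul bar w Δ (Finsupp.single (v : N) 1) t₁ + dmul bar w Δ (Finsupp.single (v : N) 1) t₂ :=
    fun v t₁ t₂ => map_add (dmulL bar w Δ (Finsupp.single (v : N) 1)) t₁ t₂
  constructor
  · intro f
    choose vF kF SF hvBox hSΔ hkS hvS hmS hcEq using
      exists_dec bar b w Δ (d := d) hw hcomplete hmax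
    refine ⟨∑ c ∈ f.support, Finsupp.single (⟨vF c, hvBox c⟩ : ↥(BoxSet bar w Δ d))
        (Finsupp.single (∑ i, kF c i • b i) (f c)), ?_, ?_⟩
    · intro v₀
      rw [Finsupp.finset_sum_apply]
      refine Submodule.sum_mem _ fun c hc => ?_
      rw [Finsupp.single_apply]
      split
      · rw [show Finsupp.single (∑ i, kF c i • b i) (f c)
            = (f c) • Finsupp.single (∑ i, kF c i • b i) (1 : ℚ) by
          rw [Finsupp.smul_single', mul_one]]
        exact Submodule.smul_mem _ _
          (Submodule.subset_span ⟨kF c, ⟨SF c, hSΔ c, hkS c⟩, rfl⟩)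
      · exact Submodule.zero_mem _
    · rw [← Finsupp.sum_finset_sum_index (fun v => hz v) (fun v t₁ t₂ => ha v t₁ t₂)]
      have hterm : ∀ c ∈ f.support,
          (Finsupp.single (⟨vF c, hvBox c⟩ : ↥(BoxSet bar w Δ d))
            (Finsupp.single (∑ i, kF c i • b i) (f c))).sum
            (fun v t => dmul bar w Δ (Finsupp.single (v : N) 1) t)
          = Finsupp.single c (f c) := by
        intro c hc
        rw [show (Finsupp.single (⟨vF c, hvBox c⟩ : ↥(BoxSet bar w Δ d))
              (Finsupp.single (∑ i, kF c i • b i) (f c))).sum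
              (fun v t => dmul bar w Δ (Finsupp.single (v : N) 1) t)
            = dmul bar w Δ (Finsupp.single (vF c) 1)
              (Finsupp.single (∑ i, kF c i • b i) (f c)) from
          Finsupp.sum_single_index (hz ⟨vF c, hvBox c⟩)]
        rw [dmul_single_single, if_pos ⟨SF c, hSΔ c, hvS c, hmS c⟩, one_mul, ← hcEq c]
      rw [Finset.sum_congr rfl hterm]
      conv_lhs => rw [← Finsupp.sum_single f]
      rfl
  · intro s s' hs hs' heq v₀
    set F : ↥(BoxSet bar w Δ d) → (N →₀ ℚ) → (N →₀ ℚ) :=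
      fun v t => dmul bar w Δ (Finsupp.single (v : N) 1) t with hF
    set u := s.support ∪ s'.support with hu
    have hsum : ∀ r : ↥(BoxSet bar w Δ d) →₀ (N →₀ ℚ), r.support ⊆ u →
        r.sum F = ∑ v ∈ u, F v (r v) := fun r hr =>
      Finsupp.sum_of_support_subset r hr F (fun v _ => hz v)
    have h0 : ∑ v ∈ u, (F v (s v) - F v (s' v)) = 0 := by
      rw [Finset.sum_sub_distrib, ← hsum s Finset.subset_union_left,
        ← hsum s' Finset.subset_union_right, heq, sub_self]
    set D : ↥(BoxSet bar w Δ d) → (N →₀ ℚ) := fun v => F v (s v) - F v (s' v) with hD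
    have hDsupp : ∀ v : ↥(BoxSet bar w Δ d), ∀ c, D v c ≠ 0 →
        GoodDec bar b w Δ (d := d) c ↑v := by
      intro v c hc
      have h1 := dmul_supported bar b w Δ (d := d) v.2 (hs v)
      have h2 := dmul_supported bar b w Δ (d := d) v.2 (hs' v)
      have hmem : D v ∈ Finsupp.supported ℚ ℚ {c | GoodDec bar b w Δ (d := d) c ↑v} :=
        sub_mem h1 h2
      rw [Finsupp.mem_supported] at hmem
      exact hmem (Finset.mem_coe.mpr (Finsupp.mem_support_iff.mpr hc))
    have hgoal : D v₀ = 0 := by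
      by_cases hv₀ : v₀ ∈ u
      · ext c
        rw [Finsupp.coe_zero, Pi.zero_apply]
        by_contra hc
        have h0c : ∑ v ∈ u, D v c = 0 := by
          have h' := congrArg (fun g : N →₀ ℚ => g c) h0
          simp only [Finset.sum_apply', Finsupp.coe_zero, Pi.zero_apply] at h'
          simpa [hD, Finsupp.sub_apply, Finset.sum_sub_distrib] using h'
        have hone : ∑ v ∈ u, D v c = D v₀ c := by
          refine Finset.sum_eq_single v₀ (fun v hv hne => ?_) (fun h => absurd hv₀ h)
          by_contra hvc
          exact hne (Subtype.ext (goodDec_unique bar b w Δ hw hind hglue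
            (hDsupp v c hvc) (hDsupp v₀ c hc)))
        exact hc (hone ▸ h0c)
      · have h1 : s v₀ = 0 := Finsupp.notMem_support_iff.mp
          (fun h => hv₀ (Finset.mem_union_left _ h))
        have h2 : s' v₀ = 0 := Finsupp.notMem_support_iff.mp
          (fun h => hv₀ (Finset.mem_union_right _ h))
        simp only [hD, h1, h2, sub_self]
    exact sub_eq_zero.mp hgoal
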